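/- If a : [0,∞) → [0,∞) is a C¹ increasing bijection with a(0)=0 satisfying a₀ ≤ t·a'(t)/a(t) ≤ a₁ for t>0, and Ã(t) = ∫₀ᵗ a⁻¹(s) ds is the complementary function, then (a₀/(1+a₀))·t·a⁻¹(t) ≤ Ã(t) ≤ t·a⁻¹(t) for all t ≥ 0. -/

import Mathlib

open Real Set

/-- Inequality (2.6): if `a` is a `C¹` increasing bijection of `[0,∞)` with `a(0)=0` satisfying
the structure condition, and `Ã(t) = ∫₀ᵗ a⁻¹(s) ds` is the complementary function, then
`(a₀/(1+a₀))·t·a⁻¹(t) ≤ Ã(t) ≤ t·a⁻¹(t)` for all `t ≥ 0`. -/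
theorem stmt_5 (a a' ainv : ℝ → ℝ) (a₀ a₁ : ℝ)
    (ha₀ : 0 < a₀) (ha₀₁ : a₀ ≤ a₁)
    (hcont : ContinuousOn a (Set.Ici 0))
    (hderiv : ∀ t > (0:ℝ), HasDerivAt a (a' t) t)
    (haz : a 0 = 0)
    (hpos : ∀ t > (0:ℝ), 0 < a t)
    (hmono : StrictMonoOn a (Set.Ici 0))
    (hsurj : ∀ y ≥ (0:ℝ), ∃ t ≥ (0:ℝ), a t = y)
    (hstruct : ∀ t > (0:ℝ), a₀ ≤ t * a' t / a t ∧ t * a' t / a t ≤ a₁)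
    (hainv_nn : ∀ t ≥ (0:ℝ), 0 ≤ ainv t)
    (hainv_right : ∀ t ≥ (0:ℝ), a (ainv t) = t)
    (hainv_left : ∀ t ≥ (0:ℝ), ainv (a t) = t) :
    ∀ t ≥ (0:ℝ),
      a₀ / (1 + a₀) * (t * ainv t) ≤ (∫ s in (0:ℝ)..t, ainv s) ∧
      (∫ s in (0:ℝ)..t, ainv s) ≤ t * ainv t := by
  have hinv0 : ainv 0 = 0 := by
    have h := hainv_left 0 le_rfl
    rwa [haz] at h
  -- ainv is monotone on [0, ∞)
  have hmono_inv : MonotoneOn ainv (Set.Ici 0) := by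
    intro s hs u hu hsu
    by_contra h
    push_neg at h
    have h2 := hmono (hainv_nn u hu) (hainv_nn s hs) h
    rw [hainv_right u hu, hainv_right s hs] at h2
    exact absurd hsu (not_le.mpr h2)
  have hinv_pos : ∀ s > (0:ℝ), 0 < ainv s := by
    intro s hs
    rcases (hainv_nn s hs.le).lt_or_eq with h | h
    · exact h
    · exfalso
      have h2 := hainv_right s hs.le
      rw [← h, haz] at h2
      linarith
  -- ainv is continuous at every positive point
  have hinv_cont : ∀ x > (0:ℝ), ContinuousAt ainv x := by
    intro x hx
    rw [Metric.continuousAt_iff]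
    intro ε hε
    set T := ainv x with hT
    have hTpos : 0 < T := hinv_pos x hx
    set e := min (ε/2) (T/2) with he
    have hepos : 0 < e := lt_min (by linarith) (by linarith)
    have heT : 0 < T - e := by
      have := min_le_right (ε/2) (T/2); simp only [← he] at this; linarith
    have haTx : a T = x := hainv_right x hx.le
    have h1 : a (T - e) < x := by
      have := hmono (le_of_lt heT) (le_of_lt hTpos) (by linarith)
      rwa [haTx] at this
    have h2 : x < a (T + e) := by
      have := hmono (le_of_lt hTpos) (by linarith : (0:ℝ) ≤ T + e) (by linarith)
      rwa [haTx] at this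
    refine ⟨min (x - a (T-e)) (a (T+e) - x), lt_min (by linarith) (by linarith), ?_⟩
    intro y hy
    rw [Real.dist_eq] at hy ⊢
    obtain ⟨hyl, hyr⟩ := abs_lt.mp hy
    have hmin1 := min_le_left (x - a (T-e)) (a (T+e) - x)
    have hmin2 := min_le_right (x - a (T-e)) (a (T+e) - x)
    have hy1 : a (T - e) < y := by linarith
    have hy2 : y < a (T + e) := by linarith
    have hy0 : 0 < y := lt_of_le_of_lt (le_of_lt (hpos _ heT)) hy1
    have hay : a (ainv y) = y := hainv_right y hy0.le
    have hl : T - e < ainv y := by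
      by_contra hcon
      push_neg at hcon
      have := hmono.monotoneOn (hainv_nn y hy0.le) (le_of_lt heT) hcon
      rw [hay] at this; linarith
    have hr : ainv y < T + e := by
      by_contra hcon
      push_neg at hcon
      have := hmono.monotoneOn (by linarith : (0:ℝ) ≤ T + e) (hainv_nn y hy0.le) hcon
      rw [hay] at this; linarith
    have heε : e ≤ ε/2 := min_le_left _ _
    rw [abs_lt]
    constructor <;> linarith
  -- a' is positive on (0, ∞)
  have ha'pos : ∀ u > (0:ℝ), 0 < a' u := by
    intro u hu
    have h := (hstruct u hu).1
    have hau := hpos u hu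
    rw [le_div_iff₀ hau] at h
    nlinarith
  -- derivative of the inverse
  have hderiv_inv : ∀ x > (0:ℝ), HasDerivAt ainv (a' (ainv x))⁻¹ x := by
    intro x hx
    refine HasDerivAt.of_local_left_inverse (hinv_cont x hx)
      (hderiv _ (hinv_pos x hx)) (ne_of_gt (ha'pos _ (hinv_pos x hx))) ?_
    filter_upwards [eventually_gt_nhds hx] with y hy
    exact hainv_right y hy.le
  -- interval integrability of ainv
  have hint : ∀ b ≥ (0:ℝ), IntervalIntegrable ainv MeasureTheory.volume 0 b := by
    intro b hb
    refine (hmono_inv.mono ?_).intervalIntegrable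
    rw [uIcc_of_le hb]
    exact Icc_subset_Ici_self
  -- FTC : the primitive has derivative ainv x at x > 0
  have hFTC : ∀ x > (0:ℝ), HasDerivAt (fun u => ∫ s in (0:ℝ)..u, ainv s) (ainv x) x := by
    intro x hx
    refine intervalIntegral.integral_hasDerivAt_right (hint x hx.le) ?_ (hinv_cont x hx)
    exact ⟨Set.Ioi 0, Ioi_mem_nhds hx,
      (ContinuousOn.aestronglyMeasurable
        (fun y hy => (hinv_cont y hy).continuousWithinAt) measurableSet_Ioi)⟩
  set c := a₀ / (1 + a₀) with hc
  have h1a₀ : (0:ℝ) < 1 + a₀ := by linarith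
  -- the auxiliary function χ(u) = ∫₀ᵘ ainv - c·u·ainv u
  set χ : ℝ → ℝ := fun u => (∫ s in (0:ℝ)..u, ainv s) - c * (u * ainv u) with hχ
  have hχderiv : ∀ x > (0:ℝ),
      HasDerivAt χ (ainv x - c * (1 * ainv x + x * (a' (ainv x))⁻¹)) x := by
    intro x hx
    exact (hFTC x hx).sub (((hasDerivAt_id x).mul (hderiv_inv x hx)).const_mul c)
  have hχderiv_nonneg : ∀ x > (0:ℝ),
      0 ≤ ainv x - c * (1 * ainv x + x * (a' (ainv x))⁻¹) := by
    intro x hx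
    set T := ainv x with hT
    have hTpos : 0 < T := hinv_pos x hx
    have haT : a T = x := hainv_right x hx.le
    have ha'T : 0 < a' T := ha'pos T hTpos
    have hstr := (hstruct T hTpos).1
    rw [haT, le_div_iff₀ hx] at hstr
    set w := (a' T)⁻¹ with hw
    have hwpos : 0 < w := inv_pos.mpr ha'T
    have hww : a' T * w = 1 := mul_inv_cancel₀ (ne_of_gt ha'T)
    have h1 : a₀ * x * w ≤ T := by
      calc a₀ * x * w ≤ (T * a' T) * w := by nlinarith
        _ = T := by rw [mul_assoc, hww, mul_one]
    have h2 : c * (1 * T + x * w) ≤ T := by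
      rw [hc, div_mul_eq_mul_div, div_le_iff₀ h1a₀]
      nlinarith
    linarith
  -- continuity of χ on [0, ∞)
  have hχcont : ContinuousOn χ (Set.Ici 0) := by
    intro x hx
    rcases eq_or_lt_of_le (Set.mem_Ici.mp hx : (0:ℝ) ≤ x) with h0 | h0
    · -- continuity at 0 within Ici 0
      rw [← h0]
      have hIcc : Set.Icc (0:ℝ) 1 ∈ nhdsWithin (0:ℝ) (Set.Ici 0) := by
        rw [← Set.Ici_inter_Iic]
        exact Filter.inter_mem self_mem_nhdsWithin
          (mem_nhdsWithin_of_mem_nhds (Iic_mem_nhds one_pos))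
      have hg : Filter.Tendsto (fun u : ℝ => u * ainv 1)
          (nhdsWithin (0:ℝ) (Set.Ici 0)) (nhds 0) := by
        have hcont' : Continuous (fun u : ℝ => u * ainv 1) :=
          continuous_id.mul continuous_const
        have := (hcont'.tendsto (0:ℝ)).mono_left (nhdsWithin_le_nhds (s := Set.Ici 0))
        simpa using this
      have hA : Filter.Tendsto (fun u => u * ainv u)
          (nhdsWithin (0:ℝ) (Set.Ici 0)) (nhds 0) := by
        refine squeeze_zero' ?_ ?_ hg
        · filter_upwards [self_mem_nhdsWithin] with u hu
          exact mul_nonneg hu (hainv_nn u hu)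
        · filter_upwards [hIcc] with u hu
          exact mul_le_mul_of_nonneg_left
            (hmono_inv (hu.1 : (0:ℝ) ≤ u) (by norm_num : (1:ℝ) ∈ Set.Ici 0) hu.2) hu.1
      have hB : Filter.Tendsto (fun u => ∫ s in (0:ℝ)..u, ainv s)
          (nhdsWithin (0:ℝ) (Set.Ici 0)) (nhds 0) := by
        refine squeeze_zero' ?_ ?_ hg
        · filter_upwards [self_mem_nhdsWithin] with u hu
          exact intervalIntegral.integral_nonneg hu (fun s hs => hainv_nn s hs.1)
        · filter_upwards [hIcc] with u hu
          calc (∫ s in (0:ℝ)..u, ainv s) ≤ ∫ s in (0:ℝ)..u, ainv 1 := by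
                refine intervalIntegral.integral_mono_on hu.1 (hint u hu.1)
                  intervalIntegrable_const ?_
                intro s hs
                exact hmono_inv hs.1 (by norm_num) (le_trans hs.2 hu.2)
            _ = u * ainv 1 := by simp
      have h0' : χ 0 = 0 := by simp [hχ]
      show Filter.Tendsto χ (nhdsWithin (0:ℝ) (Set.Ici 0)) (nhds (χ 0))
      rw [h0']
      simpa [hχ] using hB.sub (hA.const_mul c)
    · exact ((hχderiv x h0).continuousAt).continuousWithinAt
  -- χ is monotone on [0, ∞)
  have hχmono : MonotoneOn χ (Set.Ici 0) := by
    refine monotoneOn_of_deriv_nonneg (convex_Ici 0) hχcont ?_ ?_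
    · intro x hx
      rw [interior_Ici] at hx
      exact ((hχderiv x hx).differentiableAt).differentiableWithinAt
    · intro x hx
      rw [interior_Ici] at hx
      rw [(hχderiv x hx).deriv]
      exact hχderiv_nonneg x hx
  have hχ0 : χ 0 = 0 := by
    simp [hχ, hinv0]
  intro t ht
  constructor
  · -- lower bound
    have := hχmono (self_mem_Ici) ht ht
    rw [hχ0] at this
    simp only [hχ] at this
    linarith
  · -- upper bound
    calc (∫ s in (0:ℝ)..t, ainv s) ≤ ∫ s in (0:ℝ)..t, ainv t := by
          refine intervalIntegral.integral_mono_on ht (hint t ht)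
            intervalIntegrable_const ?_
          intro s hs
          exact hmono_inv hs.1 ht hs.2
      _ = t * ainv t := by simp
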